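/- Let n ≥ 5, let k ≥ 1 divide n, and consider the group C = ℤ/k × K^× for a field K, with automorphisms τ : (i, x) ↦ (−i, x^{−1}) and u_ζ : (i, x) ↦ (i, ζ^i·x) for ζ ∈ K a k-th root of unity. Suppose P = (i, x) ∈ C is an element of exact order n such that i generates ℤ/k. Then: (a) if u_ζ(P) = P then ζ = 1; and (b) if (τ ∘ u_ζ)(P) = P then x⁴ = 1 and P has order dividing 4·gcd(2,k) — contradicting order n ≥ 5. Hence P is fixed by no nontrivial automorphism of the form u_ζ or τ∘u_ζ. -/
import Mathlib


/-- The automorphism `u_ζ : (i, x) ↦ (i, ζ^i · x)` of the smooth part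
`ℤ/k × K^×` of a Néron `k`-gon. -/
def neronU (k : ℕ) (K : Type*) [Field K] (ζ : Kˣ) :
    Multiplicative (ZMod k) × Kˣ → Multiplicative (ZMod k) × Kˣ :=
  fun P => (P.1, ζ ^ (Multiplicative.toAdd P.1).val * P.2)

/-- The automorphism `τ : (i, x) ↦ (−i, x⁻¹)`. -/
def neronTau (k : ℕ) (K : Type*) [Field K] :
    Multiplicative (ZMod k) × Kˣ → Multiplicative (ZMod k) × Kˣ :=
  fun P => (P.1⁻¹, P.2⁻¹)

theorem stmt_18 (K : Type*) [Field K] (n k : ℕ) (hk : 1 ≤ k) (hkn : k ∣ n) (hn : 5 ≤ n)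
    (P : Multiplicative (ZMod k) × Kˣ) (hP : orderOf P = n)
    (hgen : AddSubgroup.zmultiples (Multiplicative.toAdd P.1) = ⊤) :
    (∀ ζ : Kˣ, ζ ^ k = 1 → neronU k K ζ P = P → ζ = 1) ∧
    (∀ ζ : Kˣ, ζ ^ k = 1 → neronTau k K (neronU k K ζ P) = P →
        P.2 ^ 4 = 1 ∧ orderOf P ∣ 4 * Nat.gcd 2 k) ∧
    (∀ ζ : Kˣ, ζ ^ k = 1 → neronTau k K (neronU k K ζ P) ≠ P) := by
  haveI : NeZero k := ⟨by omega⟩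
  set i : ZMod k := Multiplicative.toAdd P.1 with hi
  -- key computation for parts (b) and (c)
  have key : ∀ ζ : Kˣ, ζ ^ k = 1 → neronTau k K (neronU k K ζ P) = P →
      P.2 ^ 4 = 1 ∧ orderOf P ∣ 4 := by
    intro ζ hζ h
    have h1 : P.1⁻¹ = P.1 := congrArg Prod.fst h
    have h2 : (ζ ^ i.val * P.2)⁻¹ = P.2 := congrArg Prod.snd h
    have hii : i + i = 0 := by
      have hni : -i = i := by
        have := congrArg Multiplicative.toAdd h1
        simpa using this
      calc i + i = -i + i := by rw [hni]
      _ = 0 := neg_add_cancel i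
    -- k ∣ 2
    have hk2 : k ∣ 2 := by
      have h1mem : (1 : ZMod k) ∈ AddSubgroup.zmultiples i := by
        rw [hgen]; trivial
      obtain ⟨m, hm⟩ := AddSubgroup.mem_zmultiples_iff.mp h1mem
      have h2eq : ((2 : ℕ) : ZMod k) = 0 := by
        push_cast
        calc (2 : ZMod k) = (1 : ZMod k) + 1 := by ring
        _ = m • i + m • i := by rw [hm]
        _ = m • (i + i) := by rw [smul_add]
        _ = 0 := by rw [hii, smul_zero]
      exact (ZMod.natCast_eq_zero_iff 2 k).mp h2eq
    have hζ2 : ζ ^ 2 = 1 := by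
      obtain ⟨c, hc⟩ := hk2
      rw [hc, pow_mul, hζ, one_pow]
    -- second component : ζ^{i.val} = P.2⁻²
    have h2' : ζ ^ i.val * P.2 = P.2⁻¹ := inv_eq_iff_eq_inv.mp h2
    have hx4 : P.2 ^ 4 = 1 := by
      have hsq : (ζ ^ i.val) ^ 2 = 1 := by
        rw [← pow_mul, mul_comm, pow_mul, hζ2, one_pow]
      have heq : ζ ^ i.val = P.2⁻¹ * P.2⁻¹ := by
        have hh : (ζ ^ i.val * P.2) * P.2⁻¹ = P.2⁻¹ * P.2⁻¹ := by rw [h2']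
        simpa [mul_assoc] using hh
      have hsq' : (P.2⁻¹ * P.2⁻¹) ^ 2 = 1 := by rw [← heq]; exact hsq
      have h4 : (P.2)⁻¹ ^ 4 = 1 := by
        calc (P.2)⁻¹ ^ 4 = ((P.2)⁻¹ ^ 2) ^ 2 := by rw [← pow_mul]
        _ = (P.2⁻¹ * P.2⁻¹) ^ 2 := by group
        _ = 1 := hsq'
      calc P.2 ^ 4 = ((P.2)⁻¹ ^ 4)⁻¹ := by group
      _ = 1 := by rw [h4, inv_one]
    refine ⟨hx4, ?_⟩
    have hord1 : orderOf P.1 ∣ 2 := by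
      apply orderOf_dvd_of_pow_eq_one
      calc P.1 ^ 2 = P.1 * P.1 := sq P.1
      _ = P.1 * P.1⁻¹ := by rw [h1]
      _ = 1 := mul_inv_cancel P.1
    have hord2 : orderOf P.2 ∣ 4 := orderOf_dvd_of_pow_eq_one hx4
    rw [Prod.orderOf]
    exact Nat.lcm_dvd (hord1.trans (by norm_num)) hord2
  refine ⟨?_, ?_, ?_⟩
  · intro ζ hζ h
    have h2 : ζ ^ i.val * P.2 = P.2 := congrArg Prod.snd h
    have hζi : ζ ^ i.val = 1 := by
      have : ζ ^ i.val * P.2 = 1 * P.2 := by rw [h2, one_mul]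
      exact mul_right_cancel this
    have h1mem : (1 : ZMod k) ∈ AddSubgroup.zmultiples i := by
      rw [hgen]; trivial
    obtain ⟨m, hm⟩ := AddSubgroup.mem_zmultiples_iff.mp h1mem
    have hcast : ((m * (i.val : ℤ) - 1 : ℤ) : ZMod k) = 0 := by
      push_cast
      rw [ZMod.natCast_val, ZMod.cast_id]
      rw [← hm]
      simp [zsmul_eq_mul]
    have hdvd : (k : ℤ) ∣ m * (i.val : ℤ) - 1 := by
      exact_mod_cast (ZMod.intCast_zmod_eq_zero_iff_dvd _ k).mp hcast
    set d := orderOf ζ with hd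
    have hdi : d ∣ i.val := orderOf_dvd_of_pow_eq_one hζi
    have hdk : d ∣ k := orderOf_dvd_of_pow_eq_one hζ
    have hdone : (d : ℤ) ∣ 1 := by
      have h1 : (d : ℤ) ∣ m * (i.val : ℤ) := Dvd.dvd.mul_left (by exact_mod_cast hdi) m
      have h2' : (d : ℤ) ∣ m * (i.val : ℤ) - 1 := (Int.natCast_dvd_natCast.mpr hdk).trans hdvd
      have := dvd_sub h1 h2'
      simpa using this
    have : d = 1 := by
      have := Int.eq_one_of_dvd_one (by positivity) hdone
      exact_mod_cast this
    exact orderOf_eq_one_iff.mp this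
  · intro ζ hζ h
    obtain ⟨hx4, hdvd⟩ := key ζ hζ h
    exact ⟨hx4, hdvd.trans (dvd_mul_right 4 _)⟩
  · intro ζ hζ h
    have := (key ζ hζ h).2
    rw [hP] at this
    have := Nat.le_of_dvd (by norm_num) this
    omega
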